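/- Let 𝓔 be a Polish space with Borel σ-field 𝔈, let Z be a jointly measurable 𝓔-valued stochastic process on a probability space (Ω, F, P), and let Γ be a jointly measurable real-valued process satisfying E ∫_0^t |Γ_u| du < ∞ for all t ≥ 0. Let Γ̂ be a nonrandom real-valued measurable function on [0,∞) × 𝓔. Then there exists a Lebesgue-null set N ⊂ [0,∞) such that Γ̂(t, Z_t) = E[Γ_t | Z_t] almost surely for all t ∈ N^c, if and only if for every bounded B[0,∞) ⊗ 𝔈-measurable real-valued function f one has E ∫_0^t Γ̂(u, Z_u) f(u, Z_u) du = E ∫_0^t Γ_u f(u, Z_u) du for all t ≥ 0. -/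

import Mathlib

open MeasureTheory Filter Set
open scoped ENNReal NNReal Topology

noncomputable section

namespace Mimic

/-- Lebesgue measure on `[0,∞)`, modeled as `ℝ≥0`. -/
def leb : Measure ℝ≥0 := (volume : Measure ℝ).comap (↑·)

lemma measurableEmbedding_coe : MeasurableEmbedding ((↑·) : ℝ≥0 → ℝ) := by
  have emb : Topology.IsClosedEmbedding ((↑) : ℝ≥0 → ℝ) :=
    Isometry.isClosedEmbedding fun _ ↦ congrFun rfl
  exact emb.measurableEmbedding

lemma leb_apply (s : Set ℝ≥0) : leb s = volume (((↑·) : ℝ≥0 → ℝ) '' s) :=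
  measurableEmbedding_coe.comap_apply _ _

lemma leb_Iic (t : ℝ≥0) : leb (Set.Iic t) = ENNReal.ofReal t := by
  rw [leb_apply]
  have : (((↑·) : ℝ≥0 → ℝ) '' Set.Iic t) = Set.Icc (0:ℝ) t := by
    ext x
    constructor
    · rintro ⟨y, hy, rfl⟩
      exact ⟨y.2, by exact_mod_cast hy⟩
    · rintro ⟨h0, h1⟩
      exact ⟨⟨x, h0⟩, by exact_mod_cast h1, rfl⟩
  rw [this, Real.volume_Icc, sub_zero]

instance : SigmaFinite leb := by
  refine ⟨⟨⟨fun n => Set.Iic (n : ℝ≥0), fun _ => trivial, fun n => ?_, ?_⟩⟩⟩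
  · rw [leb_Iic]; exact ENNReal.ofReal_lt_top
  · ext x
    simp only [Set.mem_iUnion, Set.mem_Iic, Set.mem_univ, iff_true]
    exact exists_nat_ge x

instance (t : ℝ≥0) : IsFiniteMeasure (leb.restrict (Set.Iic t)) := by
  constructor
  rw [Measure.restrict_apply_univ, leb_Iic]
  exact ENNReal.ofReal_lt_top

lemma leb_ae_of_forall {p : ℝ≥0 → Prop}
    (h : ∀ n : ℕ, ∀ᵐ u ∂leb.restrict (Set.Iic (n : ℝ≥0)), p u) :
    ∀ᵐ u ∂leb, p u := by
  rw [ae_iff]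
  have hsub : {u : ℝ≥0 | ¬ p u} ⊆ ⋃ n : ℕ, {u : ℝ≥0 | ¬ p u} ∩ Set.Iic (n : ℝ≥0) := by
    intro u hu
    obtain ⟨n, hn⟩ := exists_nat_ge u
    exact Set.mem_iUnion.2 ⟨n, hu, hn⟩
  have hnull : ∀ n : ℕ, leb ({u : ℝ≥0 | ¬ p u} ∩ Set.Iic (n : ℝ≥0)) = 0 := by
    intro n
    have := h n
    rw [ae_iff, Measure.restrict_apply' measurableSet_Iic] at this
    exact this
  refine le_antisymm (le_trans (measure_mono hsub) ?_) (zero_le)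
  refine le_trans (measure_iUnion_le _) ?_
  simp [hnull]

private lemma foldr_inter_eq {α : Type*} (l : List (Set α)) (X : Set α) :
    l.foldr (· ∩ ·) X = l.foldr (· ∩ ·) Set.univ ∩ X := by
  induction l with
  | nil => simp
  | cons a l ih => simp [ih, Set.inter_assoc]

lemma countable_generatePiSystem {α : Type*} {S : Set (Set α)} (hS : S.Countable) :
    (generatePiSystem S).Countable := by
  haveI : Countable S := hS.to_subtype
  have hsub : generatePiSystem S ⊆
      Set.range (fun l : List S => (l.map Subtype.val).foldr (· ∩ ·) Set.univ) := by
    intro s hs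
    induction hs with
    | base h_s => exact ⟨[⟨_, h_s⟩], by simp⟩
    | inter hs ht _ ihs iht =>
      obtain ⟨l1, hl1⟩ := ihs
      obtain ⟨l2, hl2⟩ := iht
      refine ⟨l1 ++ l2, ?_⟩
      dsimp only at hl1 hl2 ⊢
      rw [List.map_append, List.foldr_append, foldr_inter_eq, hl2, hl1]
  exact (Set.countable_range _).mono hsub

lemma ae_zero_of_integral_Iic (c : ℝ≥0 → ℝ) (hc : Measurable c)
    (hint : ∀ t : ℝ≥0, IntegrableOn c (Set.Iic t) leb)
    (h0 : ∀ t : ℝ≥0, ∫ u in Set.Iic t, c u ∂leb = 0) : c =ᵐ[leb] 0 := by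
  have key : ∀ n : ℕ, ∀ᵐ u ∂leb.restrict (Set.Iic (n : ℝ≥0)), c u = 0 := by
    intro n
    set ν := leb.restrict (Set.Iic (n : ℝ≥0)) with hν
    have hcint : Integrable c ν := hint n
    have hfin1 : ∫⁻ u, ENNReal.ofReal (c u) ∂ν ≠ ∞ := by
      refine ne_of_lt (lt_of_le_of_lt (lintegral_mono fun u => ?_) hcint.2)
      rw [Real.enorm_eq_ofReal_abs]
      exact ENNReal.ofReal_le_ofReal (le_abs_self _)
    have hfin2 : ∫⁻ u, ENNReal.ofReal (-(c u)) ∂ν ≠ ∞ := by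
      refine ne_of_lt (lt_of_le_of_lt (lintegral_mono fun u => ?_) hcint.2)
      rw [Real.enorm_eq_ofReal_abs]
      exact ENNReal.ofReal_le_ofReal (neg_le_abs _)
    set μp := ν.withDensity (fun u => ENNReal.ofReal (c u)) with hμp
    set μm := ν.withDensity (fun u => ENNReal.ofReal (-(c u))) with hμm
    haveI : IsFiniteMeasure μp := isFiniteMeasure_withDensity hfin1
    haveI : IsFiniteMeasure μm := isFiniteMeasure_withDensity hfin2
    have hIic : ∀ a : ℝ≥0, μp (Set.Iic a) = μm (Set.Iic a) := by
      intro a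
      have h1 : μp (Set.Iic a) = ∫⁻ u in Set.Iic a, ENNReal.ofReal (c u) ∂ν :=
        withDensity_apply _ measurableSet_Iic
      have h2 : μm (Set.Iic a) = ∫⁻ u in Set.Iic a, ENNReal.ofReal (-(c u)) ∂ν :=
        withDensity_apply _ measurableSet_Iic
      have hz : ∫ u in Set.Iic a, c u ∂ν = 0 := by
        have hres : ν.restrict (Set.Iic a) = leb.restrict (Set.Iic ((n : ℝ≥0) ⊓ a)) := by
          rw [hν, Measure.restrict_restrict measurableSet_Iic, Set.Iic_inter_Iic,
            min_comm]
        show ∫ u, c u ∂(ν.restrict (Set.Iic a)) = 0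
        rw [hres]
        exact h0 _
      have hre := integral_eq_lintegral_pos_part_sub_lintegral_neg_part
        (hcint.restrict (s := Set.Iic a))
      rw [hz] at hre
      have hre' : (μp (Set.Iic a)).toReal = (μm (Set.Iic a)).toReal := by
        rw [h1, h2]
        have := sub_eq_zero.mp hre.symm
        simpa using this
      exact (ENNReal.toReal_eq_toReal_iff' (measure_ne_top μp _) (measure_ne_top μm _)).mp hre'
    have hμeq : μp = μm := Measure.ext_of_Iic μp μm hIic
    have hae := (withDensity_eq_iff ((ENNReal.measurable_ofReal.comp hc).aemeasurable)
      ((ENNReal.measurable_ofReal.comp hc.neg).aemeasurable) hfin1).mp hμeq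
    filter_upwards [hae] with u hu
    simp only [Function.comp_apply, Pi.neg_apply] at hu
    rcases le_total (c u) 0 with h' | h'
    · have h1 : ENNReal.ofReal (c u) = 0 := ENNReal.ofReal_eq_zero.2 h'
      have h2 : -(c u) ≤ 0 := ENNReal.ofReal_eq_zero.1 (by rw [← hu]; exact h1)
      linarith
    · have h1 : ENNReal.ofReal (-(c u)) = 0 := ENNReal.ofReal_eq_zero.2 (by linarith)
      have h2 : c u ≤ 0 := ENNReal.ofReal_eq_zero.1 (by rw [hu]; exact h1)
      linarith
  have := leb_ae_of_forall (p := fun u => c u = 0) key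
  filter_upwards [this] with u hu
  exact hu

end Mimic

namespace Mimic

/-- **Lemma.** Let `Z` be a jointly measurable `𝓔`-valued process and `Γ` a
jointly measurable real-valued process with `E ∫_0^t |Γ_u| du < ∞` for all
`t`, and let `Γ̂` be a nonrandom measurable function on `[0,∞) × 𝓔`.  Then
`Γ̂(t,Z_t) = E[Γ_t | Z_t]` for Lebesgue-a.e. `t` iff for every bounded
measurable `f`, `E ∫_0^t Γ̂(u,Z_u) f(u,Z_u) du = E ∫_0^t Γ_u f(u,Z_u) du` for
all `t ≥ 0`. -/
theorem conditional_expectation_function_iff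
    {E : Type} [TopologicalSpace E] [PolishSpace E] [MeasurableSpace E] [BorelSpace E]
    {Ω : Type} [MeasurableSpace Ω]
    (P : Measure Ω) [IsProbabilityMeasure P]
    (Z : ℝ≥0 → Ω → E) (hZ : Measurable (Function.uncurry Z))
    (Γ : ℝ≥0 → Ω → ℝ)
    (hΓ : Measurable (Function.uncurry Γ))
    -- `E ∫_0^t |Γ_u| du < ∞` for all `t ≥ 0`
    (hΓint : ∀ t : ℝ≥0, ∫⁻ ω, (∫⁻ u in Set.Iic t, (‖Γ u ω‖₊ : ℝ≥0∞) ∂leb) ∂P < ⊤)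
    (Γhat : ℝ≥0 × E → ℝ) (hΓhat : Measurable Γhat) :
    (∃ N : Set ℝ≥0, leb N = 0 ∧
      ∀ t ∉ N,
        (fun ω => Γhat (t, Z t ω))
          =ᵐ[P] P[Γ t | MeasurableSpace.comap (Z t) inferInstance]) ↔
    (∀ f : ℝ≥0 × E → ℝ, Measurable f → (∃ Cb : ℝ, ∀ p, |f p| ≤ Cb) →
      ∀ t : ℝ≥0,
        ∫ ω, (∫ u in Set.Iic t, Γhat (u, Z u ω) * f (u, Z u ω) ∂leb) ∂P =
          ∫ ω, (∫ u in Set.Iic t, Γ u ω * f (u, Z u ω) ∂leb) ∂P) := by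
  classical
  have hZm : ∀ u : ℝ≥0, Measurable (Z u) := fun u => hZ.comp measurable_prodMk_left
  have hψ : Measurable (fun q : ℝ≥0 × Ω => ((q.1, Z q.1 q.2) : ℝ≥0 × E)) :=
    measurable_fst.prodMk hZ
  have hΓq : Measurable (fun q : ℝ≥0 × Ω => Γ q.1 q.2) := hΓ
  have hΓhatq : Measurable (fun q : ℝ≥0 × Ω => Γhat (q.1, Z q.1 q.2)) := hΓhat.comp hψ
  -- integrability of `Γ` on each product space
  have hGint : ∀ t : ℝ≥0, Integrable (fun q : ℝ≥0 × Ω => Γ q.1 q.2)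
      ((leb.restrict (Set.Iic t)).prod P) := by
    intro t
    refine ⟨hΓq.aestronglyMeasurable, ?_⟩
    have h := lintegral_prod_symm (μ := leb.restrict (Set.Iic t)) (ν := P)
      (fun q : ℝ≥0 × Ω => (‖Γ q.1 q.2‖₊ : ℝ≥0∞)) hΓq.enorm.aemeasurable
    show (∫⁻ q, (‖Γ q.1 q.2‖₊ : ℝ≥0∞) ∂((leb.restrict (Set.Iic t)).prod P)) < ⊤
    rw [h]
    exact hΓint t
  -- Fubini swap for the statement's iterated integrals
  have hswap : ∀ (t : ℝ≥0) (F : ℝ≥0 × Ω → ℝ),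
      Integrable F ((leb.restrict (Set.Iic t)).prod P) →
      ∫ ω, ∫ u in Set.Iic t, F (u, ω) ∂leb ∂P =
        ∫ q, F q ∂((leb.restrict (Set.Iic t)).prod P) :=
    fun t F hF => (integral_prod_symm F hF).symm
  -- bounded multiplication preserves integrability
  have hbdd : ∀ (t : ℝ≥0) (g : ℝ≥0 × Ω → ℝ) (f : ℝ≥0 × E → ℝ) (C : ℝ),
      Measurable f → (∀ p, |f p| ≤ C) →
      Integrable g ((leb.restrict (Set.Iic t)).prod P) →
      Integrable (fun q : ℝ≥0 × Ω => g q * f (q.1, Z q.1 q.2))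
        ((leb.restrict (Set.Iic t)).prod P) := by
    intro t g f C hf hC hg
    have h1 : Integrable (fun q : ℝ≥0 × Ω => f (q.1, Z q.1 q.2) * g q)
        ((leb.restrict (Set.Iic t)).prod P) :=
      hg.bdd_mul (c := C) ((hf.comp hψ).aestronglyMeasurable)
        (Eventually.of_forall fun q => by simpa [Real.norm_eq_abs] using hC _)
    exact h1.congr (Eventually.of_forall fun q => mul_comm _ _)
  have haeΓ : ∀ᵐ u ∂leb, Integrable (fun ω => Γ u ω) P := by
    apply leb_ae_of_forall
    intro n
    filter_upwards [(hGint n).prod_right_ae] with u hu using hu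
  constructor
  · -- forward direction
    rintro ⟨N, hNnull, hN⟩ f hfm ⟨Cb, hCb⟩ t
    have haeN : ∀ᵐ u ∂leb, u ∉ N := by
      rw [ae_iff]; simpa using hNnull
    have hkey : ∀ᵐ u ∂leb,
        (∫ ω, Γhat (u, Z u ω) * f (u, Z u ω) ∂P = ∫ ω, Γ u ω * f (u, Z u ω) ∂P) ∧
          (∫⁻ ω, (‖Γhat (u, Z u ω)‖₊ : ℝ≥0∞) ∂P ≤ ∫⁻ ω, (‖Γ u ω‖₊ : ℝ≥0∞) ∂P) := by
      filter_upwards [haeΓ, haeN] with u huint huN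
      have hce := hN u huN
      have hm : MeasurableSpace.comap (Z u) inferInstance ≤ _ := (hZm u).comap_le
      haveI : SigmaFinite (P.trim hm) := inferInstance
      constructor
      · have hgm : Measurable[MeasurableSpace.comap (Z u) inferInstance]
            (fun ω => f (u, Z u ω)) :=
          (hfm.comp measurable_prodMk_left).comp (comap_measurable (Z u))
        have hfΓ : Integrable (fun ω => f (u, Z u ω) * Γ u ω) P :=
          huint.bdd_mul (c := Cb)
            ((hfm.comp (measurable_const.prodMk (hZm u))).aestronglyMeasurable)
            (Eventually.of_forall fun ω => by simpa [Real.norm_eq_abs] using hCb _)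
        have hpull := condExp_mul_of_stronglyMeasurable_left (μ := P) hgm.stronglyMeasurable hfΓ huint
        have h1 : ∫ ω, f (u, Z u ω) * (P[Γ u|MeasurableSpace.comap (Z u) inferInstance]) ω ∂P
            = ∫ ω, (P[(fun ω => f (u, Z u ω) * Γ u ω)|MeasurableSpace.comap (Z u)
                inferInstance]) ω ∂P := (integral_congr_ae hpull).symm
        rw [integral_condExp hm] at h1
        calc ∫ ω, Γhat (u, Z u ω) * f (u, Z u ω) ∂P
            = ∫ ω, (P[Γ u|MeasurableSpace.comap (Z u) inferInstance]) ω * f (u, Z u ω) ∂P :=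
              integral_congr_ae (hce.mul EventuallyEq.rfl)
          _ = ∫ ω, f (u, Z u ω) * (P[Γ u|MeasurableSpace.comap (Z u) inferInstance]) ω ∂P := by
              simp_rw [mul_comm]
          _ = ∫ ω, f (u, Z u ω) * Γ u ω ∂P := h1
          _ = ∫ ω, Γ u ω * f (u, Z u ω) ∂P := by simp_rw [mul_comm]
      · have h1 : ∫⁻ ω, (‖Γhat (u, Z u ω)‖₊ : ℝ≥0∞) ∂P
            = ∫⁻ ω, (‖(P[Γ u|MeasurableSpace.comap (Z u) inferInstance]) ω‖₊ : ℝ≥0∞) ∂P :=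
          lintegral_congr_ae (by filter_upwards [hce] with ω hω; rw [hω])
        rw [h1]
        have h2 := eLpNorm_one_condExp_le_eLpNorm (μ := P)
          (m := MeasurableSpace.comap (Z u) inferInstance) (Γ u)
        rwa [eLpNorm_one_eq_lintegral_enorm, eLpNorm_one_eq_lintegral_enorm] at h2
    have hGh : Integrable (fun q : ℝ≥0 × Ω => Γhat (q.1, Z q.1 q.2))
        ((leb.restrict (Set.Iic t)).prod P) := by
      refine ⟨hΓhatq.aestronglyMeasurable, ?_⟩
      show (∫⁻ q, (‖Γhat (q.1, Z q.1 q.2)‖₊ : ℝ≥0∞) ∂((leb.restrict (Set.Iic t)).prod P)) < ⊤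
      simp only [← enorm_eq_nnnorm]; rw [lintegral_prod _ hΓhatq.enorm.aemeasurable]
      have hb2 : ∫⁻ u, ∫⁻ ω, (‖Γhat (u, Z u ω)‖₊ : ℝ≥0∞) ∂P ∂(leb.restrict (Set.Iic t))
          ≤ ∫⁻ u, ∫⁻ ω, (‖Γ u ω‖₊ : ℝ≥0∞) ∂P ∂(leb.restrict (Set.Iic t)) :=
        lintegral_mono_ae (ae_restrict_of_ae (hkey.mono fun u hu => hu.2))
      refine lt_of_le_of_lt hb2 ?_
      simp only [← enorm_eq_nnnorm]; rw [← lintegral_prod _ hΓq.enorm.aemeasurable,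
        lintegral_prod_symm _ hΓq.enorm.aemeasurable]
      exact hΓint t
    have hint1 : Integrable (fun q : ℝ≥0 × Ω => Γhat (q.1, Z q.1 q.2) * f (q.1, Z q.1 q.2))
        ((leb.restrict (Set.Iic t)).prod P) := hbdd t _ f Cb hfm hCb hGh
    have hint2 : Integrable (fun q : ℝ≥0 × Ω => Γ q.1 q.2 * f (q.1, Z q.1 q.2))
        ((leb.restrict (Set.Iic t)).prod P) := hbdd t _ f Cb hfm hCb (hGint t)
    calc ∫ ω, ∫ u in Set.Iic t, Γhat (u, Z u ω) * f (u, Z u ω) ∂leb ∂P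
        = ∫ q, Γhat (q.1, Z q.1 q.2) * f (q.1, Z q.1 q.2)
            ∂((leb.restrict (Set.Iic t)).prod P) := hswap t _ hint1
      _ = ∫ u, ∫ ω, Γhat (u, Z u ω) * f (u, Z u ω) ∂P ∂(leb.restrict (Set.Iic t)) :=
          integral_prod _ hint1
      _ = ∫ u, ∫ ω, Γ u ω * f (u, Z u ω) ∂P ∂(leb.restrict (Set.Iic t)) :=
          integral_congr_ae (ae_restrict_of_ae (hkey.mono fun u hu => hu.1))
      _ = ∫ q, Γ q.1 q.2 * f (q.1, Z q.1 q.2) ∂((leb.restrict (Set.Iic t)).prod P) :=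
          (integral_prod _ hint2).symm
      _ = ∫ ω, ∫ u in Set.Iic t, Γ u ω * f (u, Z u ω) ∂leb ∂P := (hswap t _ hint2).symm
  · -- reverse direction
    intro hb
    -- Step 1: integrability of `Γhat ∘ ψ` on each product space
    have hGhint : ∀ t : ℝ≥0, Integrable (fun q : ℝ≥0 × Ω => Γhat (q.1, Z q.1 q.2))
        ((leb.restrict (Set.Iic t)).prod P) := by
      intro t
      set fn : ℕ → ℝ≥0 × E → ℝ := fun n p =>
        if |Γhat p| ≤ (n : ℝ) then (if Γhat p < 0 then (-1 : ℝ) else 1) else 0 with hfn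
      have hfnm : ∀ n, Measurable (fn n) := fun n =>
        Measurable.ite (measurableSet_le hΓhat.abs measurable_const)
          (Measurable.ite (measurableSet_lt hΓhat measurable_const) measurable_const
            measurable_const) measurable_const
      have hfnb : ∀ n p, |fn n p| ≤ 1 := by
        intro n p; simp only [hfn]; split_ifs <;> norm_num
      have hmul : ∀ (n : ℕ) (p : ℝ≥0 × E),
          Γhat p * fn n p = if |Γhat p| ≤ (n : ℝ) then |Γhat p| else 0 := by
        intro n p; simp only [hfn]
        by_cases h1 : |Γhat p| ≤ (n : ℝ)
        · by_cases h2 : Γhat p < 0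
          · simp [h1, h2, abs_of_neg h2]
          · simp [h1, h2, abs_of_nonneg (not_lt.mp h2)]
        · simp [h1]
      set H : ℕ → ℝ≥0 × Ω → ℝ := fun n q =>
        if |Γhat (q.1, Z q.1 q.2)| ≤ (n : ℝ) then |Γhat (q.1, Z q.1 q.2)| else 0 with hH
      have hHm : ∀ n, Measurable (H n) := fun n =>
        Measurable.ite (measurableSet_le hΓhatq.abs measurable_const) hΓhatq.abs
          measurable_const
      have hHnn : ∀ n q, 0 ≤ H n q := by
        intro n q; simp only [hH]; split_ifs
        · exact abs_nonneg _
        · exact le_refl 0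
      have hHint : ∀ n, Integrable (H n) ((leb.restrict (Set.Iic t)).prod P) := by
        intro n
        refine (integrable_const ((n : ℝ))).mono' (hHm n).aestronglyMeasurable
          (Eventually.of_forall fun q => ?_)
        simp only [hH, Real.norm_eq_abs]
        split_ifs with h
        · rwa [abs_abs]
        · simpa using (Nat.cast_nonneg n : (0:ℝ) ≤ n)
      have hGfn : ∀ n, Integrable (fun q : ℝ≥0 × Ω => Γ q.1 q.2 * fn n (q.1, Z q.1 q.2))
          ((leb.restrict (Set.Iic t)).prod P) := fun n =>
        hbdd t _ (fn n) 1 (hfnm n) (hfnb n) (hGint t)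
      have hstep : ∀ n, ∫ q, H n q ∂((leb.restrict (Set.Iic t)).prod P)
          = ∫ q, Γ q.1 q.2 * fn n (q.1, Z q.1 q.2) ∂((leb.restrict (Set.Iic t)).prod P) := by
        intro n
        calc ∫ q, H n q ∂((leb.restrict (Set.Iic t)).prod P)
            = ∫ ω, ∫ u in Set.Iic t, H n (u, ω) ∂leb ∂P := (hswap t _ (hHint n)).symm
          _ = ∫ ω, ∫ u in Set.Iic t, Γhat (u, Z u ω) * fn n (u, Z u ω) ∂leb ∂P := by
              refine integral_congr_ae (Eventually.of_forall fun ω => ?_)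
              refine integral_congr_ae (Eventually.of_forall fun u => ?_)
              exact (hmul n (u, Z u ω)).symm
          _ = ∫ ω, ∫ u in Set.Iic t, Γ u ω * fn n (u, Z u ω) ∂leb ∂P :=
              hb (fn n) (hfnm n) ⟨1, hfnb n⟩ t
          _ = ∫ q, Γ q.1 q.2 * fn n (q.1, Z q.1 q.2) ∂((leb.restrict (Set.Iic t)).prod P) :=
              hswap t _ (hGfn n)
      have habs : Integrable (fun q : ℝ≥0 × Ω => |Γ q.1 q.2|)
          ((leb.restrict (Set.Iic t)).prod P) := (hGint t).abs
      have hstep2 : ∀ n, ∫ q, H n q ∂((leb.restrict (Set.Iic t)).prod P)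
          ≤ ∫ q, |Γ q.1 q.2| ∂((leb.restrict (Set.Iic t)).prod P) := by
        intro n
        rw [hstep n]
        refine le_trans (le_abs_self _) ?_
        rw [← Real.norm_eq_abs]
        refine le_trans (norm_integral_le_integral_norm _) ?_
        refine integral_mono ((hGfn n).norm) habs fun q => ?_
        simp only [Real.norm_eq_abs, abs_mul]
        exact mul_le_of_le_one_right (abs_nonneg _) (hfnb n _)
      have hlin : ∀ n, ∫⁻ q, ENNReal.ofReal (H n q) ∂((leb.restrict (Set.Iic t)).prod P)
          ≤ ENNReal.ofReal (∫ q, |Γ q.1 q.2| ∂((leb.restrict (Set.Iic t)).prod P)) := by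
        intro n
        rw [← ofReal_integral_eq_lintegral_ofReal (hHint n)
          (Eventually.of_forall (hHnn n))]
        exact ENNReal.ofReal_le_ofReal (hstep2 n)
      refine ⟨hΓhatq.aestronglyMeasurable, ?_⟩
      have hnorm : ∀ q : ℝ≥0 × Ω,
          (‖Γhat (q.1, Z q.1 q.2)‖₊ : ℝ≥0∞) = ⨆ n : ℕ, ENNReal.ofReal (H n q) := by
        intro q
        rw [← enorm_eq_nnnorm, Real.enorm_eq_ofReal_abs]
        refine le_antisymm ?_ (iSup_le fun n => ENNReal.ofReal_le_ofReal ?_)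
        · obtain ⟨n, hn⟩ := exists_nat_ge |Γhat (q.1, Z q.1 q.2)|
          refine le_trans (le_of_eq ?_) (le_iSup (fun n => ENNReal.ofReal (H n q)) n)
          simp only [hH]; rw [if_pos hn]
        · simp only [hH]; split_ifs
          · exact le_refl _
          · exact abs_nonneg _
      have hHmono : Monotone fun (n : ℕ) (q : ℝ≥0 × Ω) => ENNReal.ofReal (H n q) := by
        intro n m hnm
        intro q
        refine ENNReal.ofReal_le_ofReal ?_
        simp only [hH]
        split_ifs with h1 h2 h3
        · exact le_refl _
        · exact absurd (h1.trans (by exact_mod_cast Nat.cast_le.2 hnm)) h2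
        · exact abs_nonneg _
        · exact le_refl _
      show (∫⁻ q, (‖Γhat (q.1, Z q.1 q.2)‖₊ : ℝ≥0∞) ∂((leb.restrict (Set.Iic t)).prod P)) < ⊤
      calc ∫⁻ q, (‖Γhat (q.1, Z q.1 q.2)‖₊ : ℝ≥0∞) ∂((leb.restrict (Set.Iic t)).prod P)
          = ∫⁻ q, ⨆ n : ℕ, ENNReal.ofReal (H n q) ∂((leb.restrict (Set.Iic t)).prod P) :=
            lintegral_congr hnorm
        _ = ⨆ n : ℕ, ∫⁻ q, ENNReal.ofReal (H n q) ∂((leb.restrict (Set.Iic t)).prod P) :=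
            lintegral_iSup (fun n => ENNReal.measurable_ofReal.comp (hHm n)) hHmono
        _ ≤ ENNReal.ofReal (∫ q, |Γ q.1 q.2| ∂((leb.restrict (Set.Iic t)).prod P)) :=
            iSup_le hlin
        _ < ⊤ := ENNReal.ofReal_lt_top
    have haeGh : ∀ᵐ u ∂leb, Integrable (fun ω => Γhat (u, Z u ω)) P := by
      apply leb_ae_of_forall
      intro n
      filter_upwards [(hGhint n).prod_right_ae] with u hu using hu
    -- Step 2: per-set a.e. equality
    have hR2 : ∀ A : Set E, MeasurableSet A → ∀ᵐ u ∂leb,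
        ∫ ω, Γhat (u, Z u ω) * (A.indicator (fun _ => (1 : ℝ)) (Z u ω)) ∂P
          = ∫ ω, Γ u ω * (A.indicator (fun _ => (1 : ℝ)) (Z u ω)) ∂P := by
      intro A hA
      set f : ℝ≥0 × E → ℝ := fun p => A.indicator (fun _ => (1 : ℝ)) p.2 with hfdef
      have hfm : Measurable f := (measurable_const.indicator hA).comp measurable_snd
      have hfb : ∀ p, |f p| ≤ 1 := by
        intro p; simp only [hfdef]
        by_cases h : p.2 ∈ A
        · simp [Set.indicator_of_mem h]
        · simp [Set.indicator_of_notMem h]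
      have hint1 : ∀ s : ℝ≥0,
          Integrable (fun q : ℝ≥0 × Ω => Γhat (q.1, Z q.1 q.2) * f (q.1, Z q.1 q.2))
            ((leb.restrict (Set.Iic s)).prod P) :=
        fun s => hbdd s _ f 1 hfm hfb (hGhint s)
      have hint2 : ∀ s : ℝ≥0,
          Integrable (fun q : ℝ≥0 × Ω => Γ q.1 q.2 * f (q.1, Z q.1 q.2))
            ((leb.restrict (Set.Iic s)).prod P) :=
        fun s => hbdd s _ f 1 hfm hfb (hGint s)
      have hsm1 : StronglyMeasurable
          (fun u => ∫ ω, Γhat (u, Z u ω) * f (u, Z u ω) ∂P) :=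
        (hΓhatq.mul (hfm.comp hψ)).stronglyMeasurable.integral_prod_right'
      have hsm2 : StronglyMeasurable (fun u => ∫ ω, Γ u ω * f (u, Z u ω) ∂P) :=
        (hΓq.mul (hfm.comp hψ)).stronglyMeasurable.integral_prod_right'
      have hzero := ae_zero_of_integral_Iic
        (fun u => (∫ ω, Γhat (u, Z u ω) * f (u, Z u ω) ∂P)
          - ∫ ω, Γ u ω * f (u, Z u ω) ∂P)
        ((hsm1.sub hsm2).measurable) ?_ ?_
      · filter_upwards [hzero] with u hu
        exact sub_eq_zero.mp hu
      · intro s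
        exact ((hint1 s).integral_prod_left).sub ((hint2 s).integral_prod_left)
      · intro s
        rw [integral_sub ((hint1 s).integral_prod_left) ((hint2 s).integral_prod_left),
          sub_eq_zero]
        calc ∫ u in Set.Iic s, ∫ ω, Γhat (u, Z u ω) * f (u, Z u ω) ∂P ∂leb
            = ∫ q, Γhat (q.1, Z q.1 q.2) * f (q.1, Z q.1 q.2)
                ∂((leb.restrict (Set.Iic s)).prod P) := (integral_prod _ (hint1 s)).symm
          _ = ∫ ω, ∫ u in Set.Iic s, Γhat (u, Z u ω) * f (u, Z u ω) ∂leb ∂P :=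
              (hswap s _ (hint1 s)).symm
          _ = ∫ ω, ∫ u in Set.Iic s, Γ u ω * f (u, Z u ω) ∂leb ∂P := hb f hfm ⟨1, hfb⟩ s
          _ = ∫ q, Γ q.1 q.2 * f (q.1, Z q.1 q.2) ∂((leb.restrict (Set.Iic s)).prod P) :=
              hswap s _ (hint2 s)
          _ = ∫ u in Set.Iic s, ∫ ω, Γ u ω * f (u, Z u ω) ∂P ∂leb := integral_prod _ (hint2 s)
    -- Step 3: countable π-system
    have h𝒜c : (generatePiSystem (MeasurableSpace.countableGeneratingSet E)).Countable :=
      countable_generatePiSystem (MeasurableSpace.countable_countableGeneratingSet)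
    have h𝒜pi : IsPiSystem (generatePiSystem (MeasurableSpace.countableGeneratingSet E)) :=
      isPiSystem_generatePiSystem _
    have h𝒜gen : (inferInstance : MeasurableSpace E)
        = MeasurableSpace.generateFrom (generatePiSystem
            (MeasurableSpace.countableGeneratingSet E)) := by
      rw [generateFrom_generatePiSystem_eq, MeasurableSpace.generateFrom_countableGeneratingSet]
    have h𝒜meas : ∀ A ∈ generatePiSystem (MeasurableSpace.countableGeneratingSet E),
        MeasurableSet A :=
      fun A hA => generatePiSystem_measurableSet
        (fun s hs => MeasurableSpace.measurableSet_countableGeneratingSet hs) A hA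
    have hall : ∀ᵐ u ∂leb,
        (∀ A ∈ generatePiSystem (MeasurableSpace.countableGeneratingSet E),
          ∫ ω, Γhat (u, Z u ω) * (A.indicator (fun _ => (1 : ℝ)) (Z u ω)) ∂P
            = ∫ ω, Γ u ω * (A.indicator (fun _ => (1 : ℝ)) (Z u ω)) ∂P) ∧
        (∫ ω, Γhat (u, Z u ω) * ((Set.univ : Set E).indicator (fun _ => (1 : ℝ)) (Z u ω)) ∂P
            = ∫ ω, Γ u ω * ((Set.univ : Set E).indicator (fun _ => (1 : ℝ)) (Z u ω)) ∂P) ∧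
        Integrable (fun ω => Γ u ω) P ∧ Integrable (fun ω => Γhat (u, Z u ω)) P :=
      ((ae_ball_iff h𝒜c).mpr (fun A hA => hR2 A (h𝒜meas A hA))).and
        ((hR2 Set.univ MeasurableSet.univ).and (haeΓ.and haeGh))
    rw [ae_iff] at hall
    refine ⟨_, hall, fun u hu => ?_⟩
    have hGood := not_not.mp hu
    obtain ⟨hpiA, huniv, hgi2, hgi1⟩ := hGood
    have hm : MeasurableSpace.comap (Z u) inferInstance ≤ _ := (hZm u).comap_le
    haveI : SigmaFinite (P.trim hm) := inferInstance
    -- converting products with indicators into set integrals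
    have hconv : ∀ (g : Ω → ℝ) (A : Set E), MeasurableSet A →
        ∫ ω, g ω * (A.indicator (fun _ => (1 : ℝ)) (Z u ω)) ∂P
          = ∫ ω in Z u ⁻¹' A, g ω ∂P := by
      intro g A hA
      rw [← integral_indicator ((hZm u) hA)]
      refine integral_congr_ae (Eventually.of_forall fun ω => ?_)
      by_cases h : Z u ω ∈ A
      · simp [Set.indicator_of_mem, h, Set.mem_preimage]
      · simp [Set.indicator_of_notMem, h, Set.mem_preimage]
    -- the four finite measures
    haveI hf1 : IsFiniteMeasure
        (P.withDensity fun ω => ENNReal.ofReal (Γhat (u, Z u ω))) :=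
      isFiniteMeasure_withDensity_ofReal hgi1.2
    haveI hf2 : IsFiniteMeasure
        (P.withDensity fun ω => ENNReal.ofReal (-Γhat (u, Z u ω))) :=
      isFiniteMeasure_withDensity_ofReal hgi1.neg.2
    haveI hf3 : IsFiniteMeasure (P.withDensity fun ω => ENNReal.ofReal (Γ u ω)) :=
      isFiniteMeasure_withDensity_ofReal hgi2.2
    haveI hf4 : IsFiniteMeasure (P.withDensity fun ω => ENNReal.ofReal (-Γ u ω)) :=
      isFiniteMeasure_withDensity_ofReal hgi2.neg.2
    haveI hm1 : IsFiniteMeasure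
        ((P.withDensity fun ω => ENNReal.ofReal (Γhat (u, Z u ω))).map (Z u)) :=
      Measure.isFiniteMeasure_map _ _
    haveI hm2 : IsFiniteMeasure
        ((P.withDensity fun ω => ENNReal.ofReal (-Γhat (u, Z u ω))).map (Z u)) :=
      Measure.isFiniteMeasure_map _ _
    haveI hm3 : IsFiniteMeasure
        ((P.withDensity fun ω => ENNReal.ofReal (Γ u ω)).map (Z u)) :=
      Measure.isFiniteMeasure_map _ _
    haveI hm4 : IsFiniteMeasure
        ((P.withDensity fun ω => ENNReal.ofReal (-Γ u ω)).map (Z u)) :=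
      Measure.isFiniteMeasure_map _ _
    have hsetint : ∀ (g : Ω → ℝ), Integrable g P → ∀ (A : Set E), MeasurableSet A →
        ∫ ω in Z u ⁻¹' A, g ω ∂P =
          (((P.withDensity fun ω => ENNReal.ofReal (g ω)).map (Z u)) A).toReal -
          (((P.withDensity fun ω => ENNReal.ofReal (-g ω)).map (Z u)) A).toReal := by
      intro g hgi A hA
      rw [Measure.map_apply (hZm u) hA, Measure.map_apply (hZm u) hA,
        withDensity_apply _ ((hZm u) hA), withDensity_apply _ ((hZm u) hA)]
      exact integral_eq_lintegral_pos_part_sub_lintegral_neg_part hgi.restrict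
    have hmeq : ∀ A : Set E, MeasurableSet A →
        ((∫ ω in Z u ⁻¹' A, Γhat (u, Z u ω) ∂P = ∫ ω in Z u ⁻¹' A, Γ u ω ∂P) ↔
        (((P.withDensity fun ω => ENNReal.ofReal (Γhat (u, Z u ω))).map (Z u)) A
            + ((P.withDensity fun ω => ENNReal.ofReal (-Γ u ω)).map (Z u)) A
          = ((P.withDensity fun ω => ENNReal.ofReal (Γ u ω)).map (Z u)) A
            + ((P.withDensity fun ω => ENNReal.ofReal (-Γhat (u, Z u ω))).map (Z u)) A)) := by
      intro A hA
      rw [hsetint _ hgi1 A hA, hsetint _ hgi2 A hA]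
      constructor
      · intro h
        have h4 : (((P.withDensity fun ω => ENNReal.ofReal (Γhat (u, Z u ω))).map (Z u)) A
              + ((P.withDensity fun ω => ENNReal.ofReal (-Γ u ω)).map (Z u)) A).toReal
            = (((P.withDensity fun ω => ENNReal.ofReal (Γ u ω)).map (Z u)) A
              + ((P.withDensity fun ω => ENNReal.ofReal (-Γhat (u, Z u ω))).map (Z u)) A).toReal := by
          rw [ENNReal.toReal_add (measure_ne_top _ _) (measure_ne_top _ _),
            ENNReal.toReal_add (measure_ne_top _ _) (measure_ne_top _ _)]
          linarith
        exact (ENNReal.toReal_eq_toReal_iff'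
          (ENNReal.add_ne_top.mpr ⟨measure_ne_top _ _, measure_ne_top _ _⟩)
          (ENNReal.add_ne_top.mpr ⟨measure_ne_top _ _, measure_ne_top _ _⟩)).mp h4
      · intro h
        have h4 := congrArg ENNReal.toReal h
        rw [ENNReal.toReal_add (measure_ne_top _ _) (measure_ne_top _ _),
          ENNReal.toReal_add (measure_ne_top _ _) (measure_ne_top _ _)] at h4
        linarith
    have hνeq : ((P.withDensity fun ω => ENNReal.ofReal (Γhat (u, Z u ω))).map (Z u))
          + ((P.withDensity fun ω => ENNReal.ofReal (-Γ u ω)).map (Z u))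
        = ((P.withDensity fun ω => ENNReal.ofReal (Γ u ω)).map (Z u))
          + ((P.withDensity fun ω => ENNReal.ofReal (-Γhat (u, Z u ω))).map (Z u)) := by
      refine ext_of_generate_finite _ h𝒜gen h𝒜pi (fun s hs => ?_) ?_
      · have h1 := hpiA s hs
        rw [hconv _ s (h𝒜meas s hs), hconv _ s (h𝒜meas s hs)] at h1
        have h2 := (hmeq s (h𝒜meas s hs)).mp h1
        simpa [Measure.add_apply] using h2
      · have h1 := huniv
        rw [hconv _ Set.univ MeasurableSet.univ, hconv _ Set.univ MeasurableSet.univ] at h1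
        have h2 := (hmeq Set.univ MeasurableSet.univ).mp h1
        simpa [Measure.add_apply] using h2
    have hALL : ∀ A : Set E, MeasurableSet A →
        ∫ ω in Z u ⁻¹' A, Γhat (u, Z u ω) ∂P = ∫ ω in Z u ⁻¹' A, Γ u ω ∂P := by
      intro A hA
      refine (hmeq A hA).mpr ?_
      have h2 : (((P.withDensity fun ω => ENNReal.ofReal (Γhat (u, Z u ω))).map (Z u))
            + ((P.withDensity fun ω => ENNReal.ofReal (-Γ u ω)).map (Z u))) A
          = (((P.withDensity fun ω => ENNReal.ofReal (Γ u ω)).map (Z u))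
            + ((P.withDensity fun ω => ENNReal.ofReal (-Γhat (u, Z u ω))).map (Z u))) A := by
        rw [hνeq]
      simpa [Measure.add_apply] using h2
    refine ae_eq_condExp_of_forall_setIntegral_eq hm hgi2 (fun s _ _ => hgi1.integrableOn)
      (fun s hs _ => ?_) ?_
    · obtain ⟨A, hAm, rfl⟩ := MeasurableSpace.measurableSet_comap.mp hs
      exact hALL A hAm
    · exact (Measurable.stronglyMeasurable
        ((hΓhat.comp measurable_prodMk_left).comp (comap_measurable (Z u)))).aestronglyMeasurable

end Mimic
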